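/- Fundamental theorem of asset pricing under model uncertainty (multi-period): there exists no self-financing trading strategy that is an arbitrage under model uncertainty if and only if there exists a martingale measure Q with Q(ω) > 0 for every ω ∈ Ω. -/

import Mathlib

open Finset MeasureTheory

variable {Ω : Type*} [Fintype Ω]

/-- A probability measure on the finite sample space `Ω`. -/
def IsProb (P : Ω → ℝ) : Prop := (∀ ω, 0 ≤ P ω) ∧ ∑ ω, P ω = 1

/-- Expectation of `X` under `P`: `E_P[X] = ∑ ω, P ω * X ω`. -/
def expect (P X : Ω → ℝ) : ℝ := ∑ ω, P ω * X ω

/-- Discounted value process of the strategy `(h0, h)`: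
`V*(0) = h0(1) + ∑ m, h m 1 * S m 0` and `V*(t) = h0(t) + ∑ m, h m t * S m t` for `t ≥ 1`. -/
def Vstar {M : ℕ} (S : Fin M → ℕ → Ω → ℝ) (h0 : ℕ → Ω → ℝ)
    (h : Fin M → ℕ → Ω → ℝ) : ℕ → Ω → ℝ := fun t ω =>
  if t = 0 then h0 1 ω + ∑ m, h m 1 ω * S m 0 ω
  else h0 t ω + ∑ m, h m t ω * S m t ω

/-- Discounted gain process `G*(t) = ∑ m, ∑ u = 1..t, h m u * (S m u − S m (u−1))`. -/
def Gstar {M : ℕ} (S : Fin M → ℕ → Ω → ℝ) (h : Fin M → ℕ → Ω → ℝ) : ℕ → Ω → ℝ :=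
  fun t ω => ∑ m, ∑ u ∈ Finset.Icc 1 t, h m u ω * (S m u ω - S m (u - 1) ω)

/-- Self-financing condition, for `t = 1, …, T−1`. -/
def SelfFinancing {M : ℕ} (T : ℕ) (S : Fin M → ℕ → Ω → ℝ) (h0 : ℕ → Ω → ℝ)
    (h : Fin M → ℕ → Ω → ℝ) : Prop :=
  ∀ t : ℕ, 1 ≤ t → t + 1 ≤ T → ∀ ω,
    (h0 (t + 1) ω - h0 t ω) + ∑ m, (h m (t + 1) ω - h m t ω) * S m t ω = 0

/-- The holdings used on `(t−1, t]` are chosen at time `t−1`: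
each `h_m(t)` is `ℱ_{t−1}`-measurable, `t = 1, …, T`. -/
def MeasStrategy {M : ℕ} (T : ℕ) (F : ℕ → MeasurableSpace Ω) (h0 : ℕ → Ω → ℝ)
    (h : Fin M → ℕ → Ω → ℝ) : Prop :=
  ∀ t : ℕ, 1 ≤ t → t ≤ T →
    Measurable[F (t - 1)] (h0 t) ∧ ∀ m, Measurable[F (t - 1)] (h m t)

/-- Arbitrage under model uncertainty in the multi-period model, given the family
`Pfam` of actual probability measures. -/
def IsArbitrage {M : ℕ} (T : ℕ) (S : Fin M → ℕ → Ω → ℝ) (Pfam : Set (Ω → ℝ))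
    (h0 : ℕ → Ω → ℝ) (h : Fin M → ℕ → Ω → ℝ) : Prop :=
  (∀ ω, Vstar S h0 h 0 ω = 0) ∧ (∀ ω, 0 ≤ Vstar S h0 h T ω) ∧
    ∃ P ∈ Pfam, 0 < expect P (Vstar S h0 h T)

/-- Martingale measure: `E_Q[S*_m(u) ∣ ℱ_t] = S*_m(t)` for all `0 ≤ t ≤ u ≤ T`,
expressed via sums over `ℱ_t`-measurable sets. -/
def IsMartingaleMeasure {M : ℕ} (T : ℕ) (F : ℕ → MeasurableSpace Ω)
    (S : Fin M → ℕ → Ω → ℝ) (Q : Ω → ℝ) : Prop :=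
  ∀ (m : Fin M) (t u : ℕ), t ≤ u → u ≤ T → ∀ A : Finset Ω,
    MeasurableSet[F t] (A : Set Ω) →
    ∑ ω ∈ A, Q ω * S m u ω = ∑ ω ∈ A, Q ω * S m t ω

/-- Supermartingale measure: `E_Q[S*_m(u) ∣ ℱ_t] ≤ S*_m(t)` for all `0 ≤ t ≤ u ≤ T`,
expressed via sums over `ℱ_t`-measurable sets. -/
def IsSupermartingaleMeasure {M : ℕ} (T : ℕ) (F : ℕ → MeasurableSpace Ω)
    (S : Fin M → ℕ → Ω → ℝ) (Q : Ω → ℝ) : Prop :=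
  ∀ (m : Fin M) (t u : ℕ), t ≤ u → u ≤ T → ∀ A : Finset Ω,
    MeasurableSet[F t] (A : Set Ω) →
    ∑ ω ∈ A, Q ω * S m u ω ≤ ∑ ω ∈ A, Q ω * S m t ω

set_option linter.unusedSectionVars false

section AuxLemmas
variable {Ω : Type*} [Fintype Ω]

lemma telescope_sum (g : ℕ → ℝ) (t : ℕ) : ∀ u, t ≤ u →
    ∑ v ∈ Finset.Icc (t+1) u, (g v - g (v-1)) = g u - g t := by
  intro u hu
  induction u, hu using Nat.le_induction with
  | base => rw [Finset.Icc_eq_empty (by omega)]; simp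
  | succ u hu ih =>
    rw [Finset.sum_Icc_succ_top (by omega), ih]
    simp only [Nat.add_sub_cancel]
    ring

lemma fiber_zero (F : MeasurableSpace Ω) (Q g D : Ω → ℝ)
    (hg : Measurable[F] g)
    (hD : ∀ A : Finset Ω, MeasurableSet[F] (A : Set Ω) → ∑ ω ∈ A, Q ω * D ω = 0) :
    ∑ ω, Q ω * (g ω * D ω) = 0 := by
  classical
  rw [← Finset.sum_fiberwise_of_maps_to (t := Finset.univ.image g)
      (fun x _ => Finset.mem_image_of_mem g (Finset.mem_univ x))
      (fun ω => Q ω * (g ω * D ω))]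
  refine Finset.sum_eq_zero fun c _ => ?_
  have hmeas : MeasurableSet[F] ((Finset.univ.filter (fun ω => g ω = c) : Finset Ω) : Set Ω) := by
    have hset : ((Finset.univ.filter (fun ω => g ω = c) : Finset Ω) : Set Ω) = g ⁻¹' {c} := by
      ext ω; simp
    rw [hset]; exact hg (measurableSet_singleton c)
  calc ∑ ω ∈ Finset.univ.filter (fun ω => g ω = c), Q ω * (g ω * D ω)
      = ∑ ω ∈ Finset.univ.filter (fun ω => g ω = c), c * (Q ω * D ω) := by
        refine Finset.sum_congr rfl fun ω hω => ?_
        have hgω := (Finset.mem_filter.mp hω).2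
        rw [hgω]; ring
    _ = c * ∑ ω ∈ Finset.univ.filter (fun ω => g ω = c), Q ω * D ω := by rw [Finset.mul_sum]
    _ = 0 := by rw [hD _ hmeas, mul_zero]

lemma clm_repr [DecidableEq Ω] (f : (Ω → ℝ) →L[ℝ] ℝ) (X : Ω → ℝ) :
    f X = ∑ ω, X ω * f ((Pi.single ω (1:ℝ) : Ω → ℝ)) := by
  have hX : X = ∑ ω, X ω • (Pi.single ω (1:ℝ) : Ω → ℝ) := by
    funext x
    rw [Finset.sum_apply]
    simp [Pi.single_apply]
  conv_lhs => rw [hX]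
  rw [map_sum]
  simp [smul_eq_mul]

end AuxLemmas
section GstarLemmas
variable {Ω : Type*} [Fintype Ω]

lemma Vstar_zero' {M : ℕ} (S : Fin M → ℕ → Ω → ℝ) (h0 : ℕ → Ω → ℝ)
    (h : Fin M → ℕ → Ω → ℝ) (ω : Ω) :
    Vstar S h0 h 0 ω = h0 1 ω + ∑ m, h m 1 ω * S m 0 ω := if_pos rfl

lemma Vstar_pos {M : ℕ} (S : Fin M → ℕ → Ω → ℝ) (h0 : ℕ → Ω → ℝ)
    (h : Fin M → ℕ → Ω → ℝ) {t : ℕ} (ht : t ≠ 0) (ω : Ω) :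
    Vstar S h0 h t ω = h0 t ω + ∑ m, h m t ω * S m t ω := if_neg ht

lemma Gstar_zero {M : ℕ} (S : Fin M → ℕ → Ω → ℝ) (h : Fin M → ℕ → Ω → ℝ) (ω : Ω) :
    Gstar S h 0 ω = 0 := by simp [Gstar]

lemma Gstar_succ {M : ℕ} (S : Fin M → ℕ → Ω → ℝ) (h : Fin M → ℕ → Ω → ℝ) (t : ℕ) (ω : Ω) :
    Gstar S h (t+1) ω = Gstar S h t ω + ∑ m, h m (t+1) ω * (S m (t+1) ω - S m t ω) := by
  unfold Gstar
  rw [← Finset.sum_add_distrib]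
  refine Finset.sum_congr rfl fun m _ => ?_
  rw [Finset.sum_Icc_succ_top (by omega)]
  simp

lemma Vstar_eq_Gstar {M T : ℕ} (S : Fin M → ℕ → Ω → ℝ) (h0 : ℕ → Ω → ℝ)
    (h : Fin M → ℕ → Ω → ℝ) (hsf : SelfFinancing T S h0 h) :
    ∀ t, 1 ≤ t → t ≤ T → ∀ ω, Vstar S h0 h t ω = Vstar S h0 h 0 ω + Gstar S h t ω := by
  intro t ht
  induction t, ht using Nat.le_induction with
  | base =>
    intro _ ω
    have hG1 : Gstar S h 1 ω = ∑ m, h m 1 ω * (S m 1 ω - S m 0 ω) := by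
      rw [show (1:ℕ) = 0 + 1 from rfl, Gstar_succ, Gstar_zero, zero_add]
    rw [hG1, Vstar_zero', Vstar_pos S h0 h one_ne_zero]
    rw [add_assoc, ← Finset.sum_add_distrib]
    congr 1
    exact Finset.sum_congr rfl fun m _ => by ring
  | succ t ht ih =>
    intro hT ω
    have ihω := ih (by omega) ω
    have hA : h0 (t+1) ω - h0 t ω +
        (∑ m, h m (t+1) ω * S m t ω - ∑ m, h m t ω * S m t ω) = 0 := by
      have := hsf t ht hT ω
      simpa [sub_mul, Finset.sum_sub_distrib] using this
    rw [Gstar_succ]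
    rw [Vstar_pos S h0 h (by omega : t ≠ 0)] at ihω
    rw [Vstar_pos S h0 h (by omega : t + 1 ≠ 0)]
    have hsub : ∑ m, h m (t+1) ω * (S m (t+1) ω - S m t ω)
        = ∑ m, h m (t+1) ω * S m (t+1) ω - ∑ m, h m (t+1) ω * S m t ω := by
      rw [← Finset.sum_sub_distrib]
      exact Finset.sum_congr rfl fun m _ => by ring
    rw [hsub]
    linarith

lemma expect_Gstar_zero {M T : ℕ} (F : ℕ → MeasurableSpace Ω) (S : Fin M → ℕ → Ω → ℝ)
    (Q : Ω → ℝ) (hQmart : IsMartingaleMeasure T F S Q)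
    (h : Fin M → ℕ → Ω → ℝ)
    (hmeas : ∀ t, 1 ≤ t → t ≤ T → ∀ m, Measurable[F (t-1)] (h m t)) :
    ∑ ω, Q ω * Gstar S h T ω = 0 := by
  have hswap : ∑ ω, Q ω * Gstar S h T ω
      = ∑ m, ∑ u ∈ Finset.Icc 1 T, ∑ ω, Q ω * (h m u ω * (S m u ω - S m (u-1) ω)) := by
    unfold Gstar
    simp_rw [Finset.mul_sum]
    rw [Finset.sum_comm]
    exact Finset.sum_congr rfl fun m _ => Finset.sum_comm
  rw [hswap]
  refine Finset.sum_eq_zero fun m _ => Finset.sum_eq_zero fun u hu => ?_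
  rw [Finset.mem_Icc] at hu
  refine fiber_zero (F (u-1)) Q (h m u) (fun ω => S m u ω - S m (u-1) ω)
    (hmeas u hu.1 hu.2 m) (fun A hA => ?_)
  have := hQmart m (u-1) u (by omega) hu.2 A hA
  simp only [mul_sub, Finset.sum_sub_distrib]
  rw [this, sub_self]

end GstarLemmas
/-- The space of attainable discounted gains of predictable strategies. -/
def gainSubmodule {Ω : Type*} [Fintype Ω] (T : ℕ) (F : ℕ → MeasurableSpace Ω) {M : ℕ}
    (S : Fin M → ℕ → Ω → ℝ) : Submodule ℝ (Ω → ℝ) where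
  carrier := {X | ∃ h : Fin M → ℕ → Ω → ℝ,
    (∀ t, 1 ≤ t → t ≤ T → ∀ m, Measurable[F (t-1)] (h m t)) ∧ X = Gstar S h T}
  zero_mem' := ⟨fun _ _ _ => 0, fun _ _ _ _ => measurable_const,
    by funext ω; simp [Gstar]⟩
  add_mem' := by
    rintro X Y ⟨hX, mX, rfl⟩ ⟨hY, mY, rfl⟩
    exact ⟨fun m t ω => hX m t ω + hY m t ω,
      fun t h1 h2 m => (mX t h1 h2 m).add (mY t h1 h2 m),
      by funext ω; simp [Gstar, add_mul, Finset.sum_add_distrib]⟩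
  smul_mem' := by
    rintro c X ⟨hX, mX, rfl⟩
    exact ⟨fun m t ω => c * hX m t ω,
      fun t h1 h2 m => (mX t h1 h2 m).const_mul c,
      by funext ω; simp [Gstar, Finset.mul_sum, mul_assoc]⟩

/-- Fundamental theorem of asset pricing under model uncertainty (multi-period). -/
theorem fundamental_theorem_multi_period [Nonempty Ω]
    (T : ℕ) {M : ℕ}
    (F : ℕ → MeasurableSpace Ω)
    (hFmono : ∀ s t : ℕ, s ≤ t → t ≤ T → F s ≤ F t)
    (hF0 : F 0 = ⊥) (hFT : F T = ⊤)
    (S : Fin M → ℕ → Ω → ℝ)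
    (hSmeas : ∀ (m : Fin M) (t : ℕ), t ≤ T → Measurable[F t] (S m t))
    (Pfam : Set (Ω → ℝ)) (hPne : Pfam.Nonempty)
    (hPprob : ∀ P ∈ Pfam, IsProb P)
    (hPpos : ∀ ω : Ω, ∃ P ∈ Pfam, 0 < P ω) :
    (¬ ∃ (h0 : ℕ → Ω → ℝ) (h : Fin M → ℕ → Ω → ℝ),
        MeasStrategy T F h0 h ∧ SelfFinancing T S h0 h ∧
          IsArbitrage T S Pfam h0 h) ↔
      ∃ Q : Ω → ℝ, IsProb Q ∧ (∀ ω, 0 < Q ω) ∧ IsMartingaleMeasure T F S Q := by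
  classical
  constructor
  · -- no arbitrage ⟹ martingale measure
    intro hNA
    set L := gainSubmodule T F S with hLdef
    -- the simplex and the gain space are disjoint
    have hdisj : Disjoint (stdSimplex ℝ Ω) (L : Set (Ω → ℝ)) := by
      rw [Set.disjoint_left]
      rintro X ⟨hXnn, hXsum⟩ ⟨hh, hhmeas, rfl⟩
      rcases Nat.eq_zero_or_pos T with hT0 | hT1
      · subst hT0; simp [Gstar] at hXsum
      · -- construct the riskless holdings
        apply hNA
        set h0 : ℕ → Ω → ℝ :=
          fun t ω => Gstar S hh (t-1) ω - ∑ m, hh m t ω * S m (t-1) ω with hh0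
        have hV0 : ∀ ω, Vstar S h0 hh 0 ω = 0 := by
          intro ω
          rw [Vstar_zero', hh0]
          simp [Gstar]
        have hVT : ∀ ω, Vstar S h0 hh T ω = Gstar S hh T ω := by
          intro ω
          obtain ⟨s, hTs⟩ : ∃ s, T = s + 1 := ⟨T-1, by omega⟩
          rw [hTs, Vstar_pos S h0 hh (by omega : s + 1 ≠ 0), Gstar_succ S hh s, hh0]
          simp only [Nat.add_sub_cancel, Nat.succ_sub_one]
          have hsp : ∑ m, hh m (s+1) ω * (S m (s+1) ω - S m s ω)
              = ∑ m, hh m (s+1) ω * S m (s+1) ω - ∑ m, hh m (s+1) ω * S m s ω := by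
            rw [← Finset.sum_sub_distrib]
            exact Finset.sum_congr rfl fun m _ => by ring
          rw [hsp]; ring
        obtain ⟨ω0, hω0⟩ : ∃ ω, 0 < Gstar S hh T ω := by
          by_contra hc; push_neg at hc
          have : ∀ ω, Gstar S hh T ω = 0 := fun ω => le_antisymm (hc ω) (hXnn ω)
          rw [Finset.sum_congr rfl fun ω _ => this ω] at hXsum
          simp at hXsum
        obtain ⟨P, hP, hPω0⟩ := hPpos ω0
        refine ⟨h0, hh, ?_, ?_, hV0, fun ω => hVT ω ▸ hXnn ω, P, hP, ?_⟩
        · -- MeasStrategy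
          intro t h1t htT
          have htT' : t - 1 ≤ T := by omega
          refine ⟨?_, hhmeas t h1t htT⟩
          rw [hh0]
          simp only [Gstar]
          apply Measurable.sub
          · apply Finset.measurable_sum
            intro m _
            apply Finset.measurable_sum
            intro u hu
            rw [Finset.mem_Icc] at hu
            exact ((hhmeas u hu.1 (by omega) m).mono
                (hFmono (u-1) (t-1) (by omega) htT') le_rfl).mul
              (((hSmeas m u (by omega)).mono (hFmono u (t-1) (by omega) htT') le_rfl).sub
               ((hSmeas m (u-1) (by omega)).mono (hFmono (u-1) (t-1) (by omega) htT') le_rfl))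
          · exact Finset.measurable_sum _ fun m _ =>
              (hhmeas t h1t htT m).mul (hSmeas m (t-1) htT')
        · -- SelfFinancing
          intro t h1t ht1T ω
          obtain ⟨s, rfl⟩ : ∃ s, t = s + 1 := ⟨t - 1, by omega⟩
          rw [hh0]
          simp only [Nat.add_sub_cancel]
          rw [Gstar_succ]
          have h1 : ∑ m, hh m (s+1) ω * (S m (s+1) ω - S m s ω)
              = ∑ m, hh m (s+1) ω * S m (s+1) ω - ∑ m, hh m (s+1) ω * S m s ω := by
            rw [← Finset.sum_sub_distrib]; exact Finset.sum_congr rfl fun m _ => by ring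
          have h2 : ∑ m, (hh m (s+1+1) ω - hh m (s+1) ω) * S m (s+1) ω
              = ∑ m, hh m (s+1+1) ω * S m (s+1) ω - ∑ m, hh m (s+1) ω * S m (s+1) ω := by
            rw [← Finset.sum_sub_distrib]; exact Finset.sum_congr rfl fun m _ => by ring
          rw [h2, h1]
          ring
        · -- positive expectation
          have hE : _root_.expect P (Vstar S h0 hh T) = ∑ ω, P ω * Gstar S hh T ω := by
            unfold _root_.expect
            exact Finset.sum_congr rfl fun ω _ => by rw [hVT ω]
          rw [hE]
          refine Finset.sum_pos' (fun ω _ => mul_nonneg ((hPprob P hP).1 ω) (hXnn ω))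
            ⟨ω0, Finset.mem_univ _, mul_pos hPω0 hω0⟩
    -- separate
    obtain ⟨f, u, v, hfK, huv, hfL⟩ := geometric_hahn_banach_compact_closed
      (convex_stdSimplex ℝ Ω) (isCompact_stdSimplex ℝ Ω) L.convex
      L.closed_of_finiteDimensional hdisj
    have hf0 : ∀ X ∈ L, f X = (0:ℝ) := by
      intro X hX
      by_contra hne
      have hmem : ((v-1)/(f X)) • X ∈ L := L.smul_mem _ hX
      have hlt := hfL _ hmem
      rw [f.map_smul, smul_eq_mul, div_mul_cancel₀ _ hne] at hlt
      linarith
    have hv0 : v < 0 := by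
      have h00 := hfL 0 L.zero_mem
      rw [map_zero] at h00
      linarith
    set q : Ω → ℝ := fun ω => -f (Pi.single ω (1:ℝ) : Ω → ℝ) with hq
    have hqpos : ∀ ω, 0 < q ω := by
      intro ω
      have hmemK : (Pi.single ω (1:ℝ) : Ω → ℝ) ∈ stdSimplex ℝ Ω := by
        refine ⟨fun x => ?_, ?_⟩
        · rw [Pi.single_apply]; split <;> norm_num
        · simp [Pi.single_apply]
      have := hfK _ hmemK
      rw [hq]
      simp only
      linarith
    set c : ℝ := ∑ ω, q ω with hc
    have hcpos : 0 < c := Finset.sum_pos (fun ω _ => hqpos ω) Finset.univ_nonempty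
    refine ⟨fun ω => q ω / c,
      ⟨fun ω => div_nonneg (hqpos ω).le hcpos.le,
       by rw [← Finset.sum_div, ← hc, div_self hcpos.ne']⟩,
      fun ω => div_pos (hqpos ω) hcpos, ?_⟩
    intro m t u htu huT A hA
    have key : ∑ ω ∈ A, q ω * (S m u ω - S m t ω) = 0 := by
      set hS : Fin M → ℕ → Ω → ℝ := fun m' v ω =>
        if m' = m ∧ t + 1 ≤ v ∧ v ≤ u then (if ω ∈ A then (1:ℝ) else 0) else 0 with hhS
      have hmem : Gstar S hS T ∈ L := by
        refine ⟨hS, ?_, rfl⟩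
        intro s h1s hsT m'
        by_cases hcond : m' = m ∧ t + 1 ≤ s ∧ s ≤ u
        · have heq : hS m' s = fun ω => if ω ∈ A then (1:ℝ) else 0 := by
            funext ω; simp only [hhS]; rw [if_pos hcond]
          rw [heq]
          have hAs : MeasurableSet[F (s-1)] {ω | ω ∈ A} :=
            hFmono t (s-1) (by omega) (by omega) _ hA
          exact Measurable.ite hAs measurable_const measurable_const
        · have heq : hS m' s = fun _ => (0:ℝ) := by
            funext ω; simp only [hhS]; rw [if_neg hcond]
          rw [heq]
          exact measurable_const
      have hGval : ∀ ω, Gstar S hS T ω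
          = (if ω ∈ A then (1:ℝ) else 0) * (S m u ω - S m t ω) := by
        intro ω
        unfold Gstar
        rw [Finset.sum_eq_single m]
        · have hsub : Finset.Icc (t+1) u ⊆ Finset.Icc 1 T := by
            intro v hv
            rw [Finset.mem_Icc] at hv ⊢
            omega
          rw [← Finset.sum_subset hsub (fun v _ hv => ?_)]
          · have hcong : ∀ v ∈ Finset.Icc (t+1) u, hS m v ω * (S m v ω - S m (v-1) ω)
                = (if ω ∈ A then (1:ℝ) else 0) * (S m v ω - S m (v-1) ω) := by
              intro v hv
              rw [Finset.mem_Icc] at hv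
              rw [hhS]; dsimp only; rw [if_pos ⟨rfl, hv.1, hv.2⟩]
            rw [Finset.sum_congr rfl hcong, ← Finset.mul_sum,
              telescope_sum (fun v => S m v ω) t u htu]
          · rw [Finset.mem_Icc] at hv
            have : ¬(t + 1 ≤ v ∧ v ≤ u) := by tauto
            rw [hhS]; dsimp only; rw [if_neg (fun h => this h.2), zero_mul]
        · intro m' _ hm'
          refine Finset.sum_eq_zero fun v _ => ?_
          simp [hhS, hm']
        · intro hm; exact absurd (Finset.mem_univ m) hm
      have hf := hf0 _ hmem
      rw [clm_repr] at hf
      have h4 : ∀ ω, Gstar S hS T ω * f (Pi.single ω (1:ℝ) : Ω → ℝ)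
          = -(if ω ∈ A then q ω * (S m u ω - S m t ω) else 0) := by
        intro ω
        rw [hGval ω, hq]
        by_cases hω : ω ∈ A <;> simp [hω] <;> ring
      rw [Finset.sum_congr rfl fun ω _ => h4 ω, Finset.sum_neg_distrib, neg_eq_zero,
        Finset.sum_ite_mem, Finset.univ_inter] at hf
      exact hf
    have hkey' : ∑ ω ∈ A, q ω * S m u ω = ∑ ω ∈ A, q ω * S m t ω := by
      have h5 : ∑ ω ∈ A, (q ω * S m u ω - q ω * S m t ω) = 0 := by
        rw [← key]; exact Finset.sum_congr rfl fun ω _ => by ring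
      rw [Finset.sum_sub_distrib] at h5
      linarith
    calc ∑ ω ∈ A, q ω / c * S m u ω = (∑ ω ∈ A, q ω * S m u ω) / c := by
          rw [Finset.sum_div]; exact Finset.sum_congr rfl fun ω _ => by ring
      _ = (∑ ω ∈ A, q ω * S m t ω) / c := by rw [hkey']
      _ = ∑ ω ∈ A, q ω / c * S m t ω := by
          rw [Finset.sum_div]; exact Finset.sum_congr rfl fun ω _ => by ring
  · -- martingale measure ⟹ no arbitrage
    rintro ⟨Q, hQprob, hQpos, hQmart⟩ ⟨h0, h, hmeas, hsf, hV0, hVT, P, hP, hEP⟩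
    obtain ⟨ω0, hω0⟩ : ∃ ω, 0 < Vstar S h0 h T ω := by
      by_contra hc; push_neg at hc
      have hzero : ∀ ω, Vstar S h0 h T ω = 0 := fun ω => le_antisymm (hc ω) (hVT ω)
      unfold _root_.expect at hEP
      rw [Finset.sum_congr rfl fun ω _ => by rw [hzero ω, mul_zero]] at hEP
      simp at hEP
    have hEQ : ∑ ω, Q ω * Vstar S h0 h T ω = 0 := by
      rcases Nat.eq_zero_or_pos T with hT0 | hT1
      · subst hT0
        rw [Finset.sum_congr rfl fun ω _ => by rw [hV0 ω, mul_zero]]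
        simp
      · have hVG := Vstar_eq_Gstar S h0 h hsf T hT1 le_rfl
        have hG := expect_Gstar_zero F S Q hQmart h (fun t h1 h2 => (hmeas t h1 h2).2)
        calc ∑ ω, Q ω * Vstar S h0 h T ω = ∑ ω, Q ω * Gstar S h T ω := by
              refine Finset.sum_congr rfl fun ω _ => ?_
              rw [hVG ω, hV0 ω, zero_add]
          _ = 0 := hG
    have hpos : 0 < ∑ ω, Q ω * Vstar S h0 h T ω :=
      Finset.sum_pos' (fun ω _ => mul_nonneg (hQpos ω).le (hVT ω))
        ⟨ω0, Finset.mem_univ _, mul_pos (hQpos ω0) hω0⟩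
    linarith
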